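/- (Theorem IIIA.) Let A and S be n×n complex matrices, Cp and Cu p×n complex matrices, and s ∈ ℂ with Φ := sI − A invertible. Let G = [[Φ⁻¹S, Φ⁻¹S],[Cp, Cp − Cu]] and define m := inf{ max(|δ'|, ‖Δ_f‖) : δ' ∈ ℝ, Δ_f an n×p complex matrix, det(I_{n+p} − G·[[δ'·I_n, 0],[0, Δ_f]]) = 0 } (so that μ_D(G) = 1/m). Assume m > 0 and the infimum set is nonempty. Then for every δ ∈ ℝ with |δ| < m, the matrix sI − A − δS is invertible and ‖T^u(s,δ)‖ ≤ 1/m, where T^u(s,δ) := (Cp − Cu) + Cp(sI − A − δS)⁻¹δS and ‖·‖ is the L2 operator norm. -/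

import Mathlib

open scoped Matrix.Norms.L2Operator
open Matrix

private lemma aux_opNorm_le {m' n' : Type*} [Fintype m'] [Fintype n'] [DecidableEq n']
    (M : Matrix m' n' ℂ) {c : ℝ} (hc : 0 ≤ c)
    (h : ∀ x : n' → ℂ, ‖(WithLp.equiv 2 (m' → ℂ)).symm (M *ᵥ x)‖ ≤
      c * ‖(WithLp.equiv 2 (n' → ℂ)).symm x‖) :
    ‖M‖ ≤ c := by
  rw [Matrix.l2_opNorm_def]
  refine ContinuousLinearMap.opNorm_le_bound _ hc fun x => ?_
  simpa [Matrix.toEuclideanLin_apply] using h (WithLp.equiv 2 (n' → ℂ) x)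

private lemma aux_cs {k : Type*} [Fintype k] (w x : k → ℂ) :
    ‖dotProduct (star w) x‖ ≤
      ‖(WithLp.equiv 2 (k → ℂ)).symm w‖ * ‖(WithLp.equiv 2 (k → ℂ)).symm x‖ := by
  have h : dotProduct (star w) x = inner ℂ ((WithLp.equiv 2 (k → ℂ)).symm w) ((WithLp.equiv 2 (k → ℂ)).symm x) := by
    rw [dotProduct_comm]; rfl
  rw [h]
  exact norm_inner_le_norm _ _

private lemma aux_vmv {m' k : Type*} [Fintype k] (v : m' → ℂ) (w x : k → ℂ) :
    Matrix.vecMulVec v w *ᵥ x = (dotProduct w x) • v := by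
  funext i
  simp only [Matrix.mulVec, dotProduct, Matrix.vecMulVec_apply, Pi.smul_apply,
    smul_eq_mul, Finset.sum_mul]
  exact Finset.sum_congr rfl fun j _ => by ring

private lemma aux_rank_one_norm {m' k : Type*} [Fintype m'] [Fintype k] [DecidableEq k]
    (v : m' → ℂ) (w : k → ℂ) :
    ‖Matrix.vecMulVec v (star w)‖ ≤
      ‖(WithLp.equiv 2 (m' → ℂ)).symm v‖ * ‖(WithLp.equiv 2 (k → ℂ)).symm w‖ := by
  apply aux_opNorm_le _ (mul_nonneg (norm_nonneg _) (norm_nonneg _))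
  intro x
  rw [aux_vmv]
  have h1 : ‖(WithLp.equiv 2 (m' → ℂ)).symm ((dotProduct (star w) x) • v)‖
      = ‖dotProduct (star w) x‖ * ‖(WithLp.equiv 2 (m' → ℂ)).symm v‖ := by
    rw [show (WithLp.equiv 2 (m' → ℂ)).symm ((dotProduct (star w) x) • v)
      = (dotProduct (star w) x) • (WithLp.equiv 2 (m' → ℂ)).symm v from rfl, norm_smul]
  rw [h1]
  have h2 := mul_le_mul_of_nonneg_right (aux_cs w x) (norm_nonneg ((WithLp.equiv 2 (m' → ℂ)).symm v))
  nlinarith [norm_nonneg ((WithLp.equiv 2 (k → ℂ)).symm x), norm_nonneg ((WithLp.equiv 2 (m' → ℂ)).symm v), norm_nonneg ((WithLp.equiv 2 (k → ℂ)).symm w)]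

private lemma aux_dot_self {k : Type*} [Fintype k] (y : k → ℂ) :
    dotProduct (star y) y = ((‖(WithLp.equiv 2 (k → ℂ)).symm y‖ : ℝ) : ℂ)^2 := by
  have h := PiLp.norm_sq_eq_of_L2 (fun _ : k => ℂ) ((WithLp.equiv 2 (k → ℂ)).symm y)
  simp only [dotProduct, Pi.star_apply, RCLike.star_def, RCLike.conj_mul]
  norm_cast
  rw [h]
  simp [WithLp.equiv_symm_apply]

/-- Theorem IIIA: robust performance bound in the unperturbed formulation.
With `G = [[Φ⁻¹S, Φ⁻¹S],[Cp, Cp − Cu]]` and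
`m = inf { max(|δ'|, ‖Δ_f‖) : det(I − G·block-diag(δ'I, Δ_f)) = 0 }` (so `μ_D(G) = 1/m`),
for every real `δ` with `|δ| < m`, `sI − A − δS` is invertible and `‖T^u(s,δ)‖ ≤ 1/m`. -/
theorem thm_IIIA_unperturbed_robust_performance
    {n p : ℕ}
    (A S : Matrix (Fin n) (Fin n) ℂ) (Cp Cu : Matrix (Fin p) (Fin n) ℂ) (s : ℂ)
    (hΦ : IsUnit (s • (1 : Matrix (Fin n) (Fin n) ℂ) - A))
    (G : Matrix (Fin n ⊕ Fin p) (Fin n ⊕ Fin n) ℂ)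
    (hG : G = Matrix.fromBlocks
        ((s • (1 : Matrix (Fin n) (Fin n) ℂ) - A)⁻¹ * S)
        ((s • (1 : Matrix (Fin n) (Fin n) ℂ) - A)⁻¹ * S)
        Cp (Cp - Cu))
    (P : Set ℝ)
    (hP : P = {x : ℝ | ∃ (δ' : ℝ) (Δf : Matrix (Fin n) (Fin p) ℂ),
        x = max |δ'| ‖Δf‖ ∧
        ((1 : Matrix (Fin n ⊕ Fin p) (Fin n ⊕ Fin p) ℂ)
          - G * Matrix.fromBlocks ((δ' : ℂ) • (1 : Matrix (Fin n) (Fin n) ℂ)) 0 0 Δf).det = 0})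
    (hne : P.Nonempty) (hm : 0 < sInf P) :
    ∀ δ : ℝ, |δ| < sInf P →
      IsUnit (s • (1 : Matrix (Fin n) (Fin n) ℂ) - A - (δ : ℂ) • S) ∧
      ‖(Cp - Cu) + Cp * (s • (1 : Matrix (Fin n) (Fin n) ℂ) - A - (δ : ℂ) • S)⁻¹
          * ((δ : ℂ) • S)‖ ≤ 1 / sInf P := by
  intro δ hδ
  have hbdd : BddBelow P := by
    refine ⟨0, fun x hx => ?_⟩
    rw [hP] at hx
    obtain ⟨δ', Δf, rfl, -⟩ := hx
    exact le_trans (abs_nonneg δ') (le_max_left _ _)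
  set m := sInf P with hmdef
  set Φ : Matrix (Fin n) (Fin n) ℂ := s • (1 : Matrix (Fin n) (Fin n) ℂ) - A with hΦdef
  have hΦd : IsUnit Φ.det := (Matrix.isUnit_iff_isUnit_det Φ).mp hΦ
  have hΦinv : Φ * Φ⁻¹ = 1 := Matrix.mul_nonsing_inv Φ hΦd
  set A' : Matrix (Fin n) (Fin n) ℂ := 1 - (δ : ℂ) • (Φ⁻¹ * S) with hA'def
  have hfact : s • (1 : Matrix (Fin n) (Fin n) ℂ) - A - (δ : ℂ) • S = Φ * A' := by
    rw [hA'def, Matrix.mul_sub, Matrix.mul_one, Matrix.mul_smul, ← Matrix.mul_assoc, hΦinv,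
      Matrix.one_mul]
  have hblock : ∀ Δf : Matrix (Fin n) (Fin p) ℂ,
      (1 : Matrix (Fin n ⊕ Fin p) (Fin n ⊕ Fin p) ℂ)
        - G * Matrix.fromBlocks ((δ : ℂ) • (1 : Matrix (Fin n) (Fin n) ℂ)) 0 0 Δf
      = Matrix.fromBlocks A' (-(Φ⁻¹ * S * Δf)) (-((δ : ℂ) • Cp)) (1 - (Cp - Cu) * Δf) := by
    intro Δf
    rw [hG, Matrix.fromBlocks_multiply, ← Matrix.fromBlocks_one, sub_eq_add_neg,
      Matrix.fromBlocks_neg, Matrix.fromBlocks_add]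
    simp [hA'def, Matrix.mul_smul, sub_eq_add_neg]
  have hA'det : A'.det ≠ 0 := by
    intro h0
    have hxP : max |δ| ‖(0 : Matrix (Fin n) (Fin p) ℂ)‖ ∈ P := by
      rw [hP]
      refine ⟨δ, 0, rfl, ?_⟩
      rw [hblock 0, Matrix.mul_zero, neg_zero, Matrix.mul_zero, sub_zero,
        Matrix.det_fromBlocks_zero₁₂, h0, zero_mul]
    have hle := csInf_le hbdd hxP
    rw [norm_zero, max_eq_left (abs_nonneg δ)] at hle
    exact absurd hδ (not_lt.mpr hle)
  have hA'unit : IsUnit A' := (Matrix.isUnit_iff_isUnit_det A').mpr (isUnit_iff_ne_zero.mpr hA'det)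
  have hunit : IsUnit (s • (1 : Matrix (Fin n) (Fin n) ℂ) - A - (δ : ℂ) • S) := by
    rw [hfact]; exact hΦ.mul hA'unit
  refine ⟨hunit, ?_⟩
  set T : Matrix (Fin p) (Fin n) ℂ :=
    Cp - Cu + Cp * (s • (1 : Matrix (Fin n) (Fin n) ℂ) - A - (δ : ℂ) • S)⁻¹ * ((δ : ℂ) • S)
    with hTdef
  haveI : Invertible A' := A'.invertibleOfIsUnitDet (isUnit_iff_ne_zero.mpr hA'det)
  have hinv2 : (s • (1 : Matrix (Fin n) (Fin n) ℂ) - A - (δ : ℂ) • S)⁻¹ = A'⁻¹ * Φ⁻¹ := by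
    rw [hfact, Matrix.mul_inv_rev]
  have hdet : ∀ Δf : Matrix (Fin n) (Fin p) ℂ,
      ((1 : Matrix (Fin n ⊕ Fin p) (Fin n ⊕ Fin p) ℂ)
        - G * Matrix.fromBlocks ((δ : ℂ) • (1 : Matrix (Fin n) (Fin n) ℂ)) 0 0 Δf).det
      = A'.det * ((1 : Matrix (Fin p) (Fin p) ℂ) - T * Δf).det := by
    intro Δf
    rw [hblock Δf, Matrix.det_fromBlocks₁₁]
    congr 2
    rw [Matrix.invOf_eq_nonsing_inv, hTdef, hinv2]
    simp only [Matrix.neg_mul, Matrix.mul_neg, neg_neg, Matrix.add_mul, Matrix.smul_mul,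
      Matrix.mul_smul, Matrix.mul_assoc]
    abel
  by_contra hT
  have hT' : ∃ x : Fin n → ℂ, (1/m) * ‖(WithLp.equiv 2 (Fin n → ℂ)).symm x‖ <
      ‖(WithLp.equiv 2 (Fin p → ℂ)).symm (T *ᵥ x)‖ := by
    by_contra hall
    push_neg at hall
    exact hT (aux_opNorm_le T (by positivity) fun x => hall x)
  obtain ⟨x, hx⟩ := hT'
  set y : Fin p → ℂ := T *ᵥ x with hydef
  set c : ℝ := ‖(WithLp.equiv 2 (Fin p → ℂ)).symm y‖ with hcdef
  have hc0 : 0 < c := lt_of_le_of_lt (by positivity) hx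
  have hy0 : y ≠ 0 := by
    intro h
    have : c = 0 := by rw [hcdef, h]; simp
    linarith
  have hcC : ((c : ℂ))^2 ≠ 0 := pow_ne_zero _ (by exact_mod_cast hc0.ne')
  set Δf : Matrix (Fin n) (Fin p) ℂ := ((c : ℂ)^2)⁻¹ • Matrix.vecMulVec x (star y) with hΔfdef
  have happ : ((1 : Matrix (Fin p) (Fin p) ℂ) - T * Δf) *ᵥ y = 0 := by
    rw [Matrix.sub_mulVec, Matrix.one_mulVec, ← Matrix.mulVec_mulVec, hΔfdef,
      Matrix.smul_mulVec, aux_vmv, aux_dot_self, ← hcdef, smul_smul,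
      inv_mul_cancel₀ hcC, one_smul, ← hydef, sub_self]
  have hdet0 : ((1 : Matrix (Fin p) (Fin p) ℂ) - T * Δf).det = 0 := by
    rw [← Matrix.exists_mulVec_eq_zero_iff]
    exact ⟨y, hy0, happ⟩
  have hnorm1 : ‖((c : ℂ)^2)⁻¹‖ = (c^2)⁻¹ := by
    have hcc : ‖(c : ℂ)‖ = c := by
      rw [Complex.norm_real, Real.norm_eq_abs, abs_of_nonneg hc0.le]
    rw [norm_inv, norm_pow, hcc]
  have h1 : ‖Δf‖ ≤ (c^2)⁻¹ * (‖(WithLp.equiv 2 (Fin n → ℂ)).symm x‖ * c) := by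
    rw [hΔfdef, norm_smul, hnorm1]
    refine mul_le_mul_of_nonneg_left ?_ (by positivity)
    have := aux_rank_one_norm x y
    rw [← hcdef] at this
    exact this
  have hΔfnorm : ‖Δf‖ < m := by
    have hex : 0 ≤ ‖(WithLp.equiv 2 (Fin n → ℂ)).symm x‖ := norm_nonneg _
    have hmx : ‖(WithLp.equiv 2 (Fin n → ℂ)).symm x‖ < m * c := by
      have hx' : ‖(WithLp.equiv 2 (Fin n → ℂ)).symm x‖ / m < c := by
        rw [div_eq_mul_inv, mul_comm, ← one_div]
        exact hx
      rw [div_lt_iff₀ hm] at hx'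
      linarith
    calc ‖Δf‖ ≤ (c^2)⁻¹ * (‖(WithLp.equiv 2 (Fin n → ℂ)).symm x‖ * c) := h1
      _ < (c^2)⁻¹ * (m * c * c) := by
          apply mul_lt_mul_of_pos_left _ (by positivity)
          exact mul_lt_mul_of_pos_right hmx hc0
      _ = m := by field_simp
  have hxP : max |δ| ‖Δf‖ ∈ P := by
    rw [hP]
    exact ⟨δ, Δf, rfl, by rw [hdet Δf, hdet0, mul_zero]⟩
  have hle := csInf_le hbdd hxP
  have hlt := max_lt hδ hΔfnorm
  exact absurd hle (not_le.mpr hlt)
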